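/- If σ and σ' are victorious probabilistic trace strategies, then for any p ∈ (0,1) the convex combination σ +_p σ' (sending each play s to p·σ(s) + (1−p)·σ'(s)) is victorious. -/

import Mathlib

open scoped ENNReal Classical

/-- Active-ending plays over signature `(K, ar)`: alternating sequences of
outputs `k : K` and inputs `i : ar k`. -/
inductive APlay (K : Type) (ar : K → Type) : Type
  | nil : APlay K ar
  | cons (k : K) (i : ar k) (s : APlay K ar) : APlay K ar

variable {K : Type} {ar : K → Type}

/-- Append an output-input pair at the end of an active-ending play. -/
def APlay.snoc : APlay K ar → (k : K) → ar k → APlay K ar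
  | .nil, k, i => .cons k i .nil
  | .cons l j s, k, i => .cons l j (s.snoc k i)

/-- The number of output-input cycles in an active-ending play. -/
def APlay.len : APlay K ar → ℕ
  | .nil => 0
  | .cons _ _ s => s.len + 1

/-- A play-measure: values in `[0,1]` on passive-ending plays (an active play
followed by an output), with `σ_act t = ∑_k σ_pass (t.k)` and
`σ_act (s.k.i) = σ_pass (s.k)`. -/
structure PlayMeasure (K : Type) (ar : K → Type) where
  pass : APlay K ar → K → ℝ≥0∞
  le_one : ∀ t, (∑' k, pass t k) ≤ 1
  consistent : ∀ s k (i : ar k), pass s k = ∑' l, pass (s.snoc k i) l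

/-- The value of a play-measure on an active-ending play. -/
noncomputable def PlayMeasure.act (σ : PlayMeasure K ar) (t : APlay K ar) : ℝ≥0∞ :=
  ∑' k, σ.pass t k

/-- The weight of a play-measure. -/
noncomputable def PlayMeasure.weight (σ : PlayMeasure K ar) : ℝ≥0∞ := σ.act .nil

/-- A partial counterstrategy, given by its set of active-ending plays. -/
structure Counterstrategy (K : Type) (ar : K → Type) where
  act : Set (APlay K ar)
  nil_mem : APlay.nil ∈ act
  prefix_closed : ∀ (s : APlay K ar) (k : K) (i : ar k), s.snoc k i ∈ act → s ∈ act
  deterministic : ∀ (s : APlay K ar) (k : K) (i j : ar k),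
      s.snoc k i ∈ act → s.snoc k j ∈ act → i = j

/-- The passive-ending play `s.k` is a `ρ`-failure: it is in `ρ_pass`
and has no prescribed input. -/
def Counterstrategy.Fails (ρ : Counterstrategy K ar) (s : APlay K ar) (k : K) : Prop :=
  s ∈ ρ.act ∧ ∀ i : ar k, s.snoc k i ∉ ρ.act

/-- `P^m_ρ(σ)`: the sum of `σ_act` over the length-`m` plays in `ρ_act`. -/
noncomputable def contProb (ρ : Counterstrategy K ar) (σ : PlayMeasure K ar) (m : ℕ) : ℝ≥0∞ :=
  ∑' s : {s : APlay K ar // s ∈ ρ.act ∧ s.len = m}, σ.act s.1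

/-- The sum of `σ_pass` over the `ρ`-failures of length `m`. -/
noncomputable def failProb (ρ : Counterstrategy K ar) (σ : PlayMeasure K ar) (m : ℕ) : ℝ≥0∞ :=
  ∑' p : {p : APlay K ar × K // ρ.Fails p.1 p.2 ∧ p.1.len = m}, σ.pass p.1.1 p.1.2

/-- A play-measure is victorious when against every partial counterstrategy,
the probability of play continuing forever is zero. -/
def Victorious (σ : PlayMeasure K ar) : Prop :=
  ∀ ρ : Counterstrategy K ar, (⨅ m, contProb ρ σ m) = 0

/-- The length-`n` prefix of an infinite play. -/
def prefixPlay (f : ℕ → Σ k : K, ar k) : ℕ → APlay K ar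
  | 0 => .nil
  | n + 1 => (prefixPlay f n).snoc (f n).1 (f n).2

/-- A play-measure is well-founded when no infinite play has all its
prefixes in the support. -/
def PlayMeasure.WellFoundedPM (σ : PlayMeasure K ar) : Prop :=
  ¬ ∃ f : ℕ → Σ k : K, ar k, ∀ n, 0 < σ.pass (prefixPlay f n) (f n).1

/-- A play-measure is finitely branching when each active-ending play has
finitely many possible next outputs in the support. -/
def PlayMeasure.FinBranch (σ : PlayMeasure K ar) : Prop :=
  ∀ t : APlay K ar, {k : K | 0 < σ.pass t k}.Finite

/-- Finitely founded: well-founded and finitely branching. -/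
def PlayMeasure.FinFounded (σ : PlayMeasure K ar) : Prop :=
  σ.WellFoundedPM ∧ σ.FinBranch

/-- `f` is uniformly below `g`: there is `d > 0` with `f s + d ≤ g s` on
every passive-ending play `s` in the support of `f`. -/
def UBelow (f g : APlay K ar → K → ℝ≥0∞) : Prop :=
  ∃ d : ℝ≥0∞, 0 < d ∧ ∀ s k, 0 < f s k → f s k + d ≤ g s k

lemma APlay.len_snoc (s : APlay K ar) (k : K) (i : ar k) :
    (s.snoc k i).len = s.len + 1 := by
  induction s with
  | nil => rfl
  | cons l j t ih => simp [APlay.snoc, APlay.len, ih]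

lemma APlay.exists_unsnoc : ∀ (s : APlay K ar), 0 < s.len →
    ∃ (t : APlay K ar) (k : K) (i : ar k), s = t.snoc k i := by
  intro s hs
  induction s with
  | nil => simp [APlay.len] at hs
  | cons l j t ih =>
    cases t with
    | nil => exact ⟨.nil, l, j, rfl⟩
    | cons l' j' t' =>
      obtain ⟨u, k, i, hu⟩ := ih (by simp [APlay.len])
      exact ⟨.cons l j u, k, i, by simp [APlay.snoc, hu]⟩

lemma PlayMeasure.act_snoc (σ : PlayMeasure K ar) (s : APlay K ar) (k : K) (i : ar k) :
    σ.act (s.snoc k i) = σ.pass s k := (σ.consistent s k i).symm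

lemma snoc_eq_of_det (ρ : Counterstrategy K ar) (u : APlay K ar) (k1 k2 : K)
    (i1 : ar k1) (i2 : ar k2) (h1 : u.snoc k1 i1 ∈ ρ.act) (h2 : u.snoc k2 i2 ∈ ρ.act)
    (hk : k1 = k2) : u.snoc k1 i1 = u.snoc k2 i2 := by
  subst hk
  rw [ρ.deterministic u k1 i1 i2 h1 h2]

lemma contProb_antitone (ρ : Counterstrategy K ar) (σ : PlayMeasure K ar) :
    Antitone (contProb ρ σ) := by
  apply antitone_nat_of_succ_le
  intro m
  -- decompose each play of length m+1
  have key : ∀ s' : {s : APlay K ar // s ∈ ρ.act ∧ s.len = m + 1},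
      ∃ (t : APlay K ar) (k : K) (i : ar k),
        s'.1 = t.snoc k i ∧ t ∈ ρ.act ∧ t.len = m := by
    rintro ⟨s, hs, hlen⟩
    obtain ⟨t, k, i, rfl⟩ := APlay.exists_unsnoc s (by omega)
    refine ⟨t, k, i, rfl, ρ.prefix_closed t k i hs, ?_⟩
    rw [APlay.len_snoc] at hlen; omega
  choose t k i hspec hmem hlen using key
  have hle : contProb ρ σ (m + 1) ≤
      ∑' x : {s : APlay K ar // s ∈ ρ.act ∧ s.len = m} × K, σ.pass x.1.1 x.2 := by
    refine ENNReal.summable.tsum_le_tsum_of_inj (fun s' => (⟨t s', hmem s', hlen s'⟩, k s')) ?_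
      (fun _ _ => zero_le) ?_ ENNReal.summable
    · intro a b hab
      simp only [Prod.mk.injEq, Subtype.mk.injEq] at hab
      obtain ⟨ht, hk⟩ := hab
      have ha := a.2.1; have hb := b.2.1
      rw [hspec a] at ha
      rw [hspec b, ← ht] at hb
      have heq := snoc_eq_of_det ρ (t a) (k a) (k b) (i a) (i b) ha hb hk
      apply Subtype.ext
      rw [hspec a, hspec b, ← ht]
      exact heq
    · intro s'
      rw [hspec s', PlayMeasure.act_snoc]
  calc contProb ρ σ (m + 1)
      ≤ ∑' x : {s : APlay K ar // s ∈ ρ.act ∧ s.len = m} × K, σ.pass x.1.1 x.2 := hle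
    _ = contProb ρ σ m := by
        rw [ENNReal.tsum_prod']
        rfl

/-- The convex combination `σ +_p σ'` of victorious probabilistic trace
strategies is victorious. -/
theorem stmt_6 {K : Type} {ar : K → Type}
    (σ σ' τ : PlayMeasure K ar) (hσ : σ.weight = 1) (hσ' : σ'.weight = 1)
    (p : ℝ≥0∞) (hp0 : 0 < p) (hp1 : p < 1)
    (hτ : ∀ s k, τ.pass s k = p * σ.pass s k + (1 - p) * σ'.pass s k)
    (h1 : Victorious σ) (h2 : Victorious σ') :
    Victorious τ := by
  intro ρ
  set q : ℝ≥0∞ := 1 - p with hq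
  have hact : ∀ s, τ.act s = p * σ.act s + q * σ'.act s := by
    intro s
    unfold PlayMeasure.act
    simp only [hτ, ENNReal.tsum_add, ENNReal.tsum_mul_left]
  have hcont : ∀ m, contProb ρ τ m = p * contProb ρ σ m + q * contProb ρ σ' m := by
    intro m
    unfold contProb
    simp only [hact, ENNReal.tsum_add, ENNReal.tsum_mul_left]
  have hp_ne : p ≠ ∞ := (hp1.trans ENNReal.one_lt_top).ne
  have hq_ne : q ≠ ∞ := by
    refine ne_top_of_le_ne_top ENNReal.one_ne_top ?_
    exact tsub_le_self
  -- limits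
  have ha : Filter.Tendsto (contProb ρ σ) Filter.atTop (nhds 0) := by
    rw [← h1 ρ]
    exact tendsto_atTop_iInf (contProb_antitone ρ σ)
  have hb : Filter.Tendsto (contProb ρ σ') Filter.atTop (nhds 0) := by
    rw [← h2 ρ]
    exact tendsto_atTop_iInf (contProb_antitone ρ σ')
  have hτt : Filter.Tendsto (contProb ρ τ) Filter.atTop (nhds 0) := by
    have h₁ := ENNReal.Tendsto.const_mul ha (Or.inr hp_ne)
    have h₂ := ENNReal.Tendsto.const_mul hb (Or.inr hq_ne)
    have := h₁.add h₂
    simp only [mul_zero, add_zero] at this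
    simpa only [hcont] using this.congr (fun m => (hcont m).symm)
  have hτanti : Antitone (contProb ρ τ) := by
    intro m n hmn
    rw [hcont, hcont]
    exact add_le_add (mul_le_mul_right (contProb_antitone ρ σ hmn) p)
      (mul_le_mul_right (contProb_antitone ρ σ' hmn) q)
  exact tendsto_nhds_unique (tendsto_atTop_iInf hτanti) hτt
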